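/- Let π be any policy of a finite MDP, F differentiable and concave on M, and let ε > 0. Then ⟨∇F(μ_π), μ' − μ_π⟩ ≤ ε for all μ' ∈ M if and only if the exploitability φ(π) = max_{π'} J(π', μ_π) − J(π, μ_π) is at most ε, where J(π', μ) = ⟨μ_{π'}, ∇F(μ)⟩. -/

import Mathlib

noncomputable section
open scoped BigOperators

def IsDist {X : Type*} [Fintype X] (p : X → ℝ) : Prop :=
  (∀ x, 0 ≤ p x) ∧ ∑ x, p x = 1

def IsPolicy {S A : Type*} [Fintype A] (π : S → A → ℝ) : Prop :=
  ∀ s, IsDist (π s)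

def IsKernel {S A : Type*} [Fintype S] (P : S → A → S → ℝ) : Prop :=
  ∀ s a, IsDist (P s a)

/-- Probability of (S_t = s, A_t = a) under policy `π`, kernel `P`, initial law `ρ0`. -/
def saDist {S A : Type*} [Fintype S] [Fintype A] (P : S → A → S → ℝ) (π : S → A → ℝ)
    (ρ0 : S → ℝ) : ℕ → S → A → ℝ
  | 0 => fun s a => ρ0 s * π s a
  | (t + 1) => fun s a => π s a * ∑ s' : S, ∑ a' : A, P s' a' s * saDist P π ρ0 t s' a'

/-- Discounted state-action occupancy measure of policy `π`. -/
def occ {S A : Type*} [Fintype S] [Fintype A] (γ : ℝ) (P : S → A → S → ℝ)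
    (π : S → A → ℝ) (ρ0 : S → ℝ) (s : S) (a : A) : ℝ :=
  (1 - γ) * ∑' t : ℕ, γ ^ t * saDist P π ρ0 t s a

/-- The Bellman flow constraint set `M`. -/
def InFlow {S A : Type*} [Fintype S] [Fintype A] (γ : ℝ) (P : S → A → S → ℝ)
    (ρ0 : S → ℝ) (μ : S → A → ℝ) : Prop :=
  IsDist (fun p : S × A => μ p.1 p.2) ∧
  ∀ s, ∑ a, μ s a = (1 - γ) * ρ0 s + γ * ∑ s' : S, ∑ a' : A, P s' a' s * μ s' a'


section auxlemmas
variable {S A : Type*} [Fintype S] [Fintype A]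
variable {γ : ℝ} {P : S → A → S → ℝ} {π : S → A → ℝ} {ρ0 : S → ℝ}

lemma saDist_nonneg (hP : IsKernel P) (hπ : IsPolicy π) (hρ0 : IsDist ρ0) :
    ∀ t s a, 0 ≤ saDist P π ρ0 t s a := by
  intro t
  induction t with
  | zero => intro s a; exact mul_nonneg (hρ0.1 s) ((hπ s).1 a)
  | succ t ih =>
    intro s a
    exact mul_nonneg ((hπ s).1 a) (Finset.sum_nonneg fun s' _ =>
      Finset.sum_nonneg fun a' _ => mul_nonneg ((hP s' a').1 s) (ih s' a'))

lemma saDist_total (hP : IsKernel P) (hπ : IsPolicy π) (hρ0 : IsDist ρ0) :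
    ∀ t, ∑ s : S, ∑ a : A, saDist P π ρ0 t s a = 1 := by
  intro t
  induction t with
  | zero =>
    simp only [saDist]
    rw [show ∑ s : S, ∑ a : A, ρ0 s * π s a = ∑ s : S, ρ0 s * ∑ a : A, π s a by
      refine Finset.sum_congr rfl fun s _ => ?_; rw [Finset.mul_sum]]
    simp only [fun s => (hπ s).2, mul_one]
    exact hρ0.2
  | succ t ih =>
    simp only [saDist]
    have h1 : ∀ s : S, ∑ a : A, π s a *
        (∑ s' : S, ∑ a' : A, P s' a' s * saDist P π ρ0 t s' a') =
        ∑ s' : S, ∑ a' : A, P s' a' s * saDist P π ρ0 t s' a' := by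
      intro s
      rw [← Finset.sum_mul, (hπ s).2, one_mul]
    rw [Finset.sum_congr rfl fun s _ => h1 s, Finset.sum_comm]
    have h2 : ∀ s' : S, ∑ s : S, ∑ a' : A, P s' a' s * saDist P π ρ0 t s' a' =
        ∑ a' : A, saDist P π ρ0 t s' a' := by
      intro s'
      rw [Finset.sum_comm]
      refine Finset.sum_congr rfl fun a' _ => ?_
      rw [← Finset.sum_mul, (hP s' a').2, one_mul]
    rw [Finset.sum_congr rfl fun s' _ => h2 s']
    exact ih

lemma saDist_le_one (hP : IsKernel P) (hπ : IsPolicy π) (hρ0 : IsDist ρ0) (t : ℕ) (s : S)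
    (a : A) : saDist P π ρ0 t s a ≤ 1 := by
  have h := saDist_total hP hπ hρ0 t
  calc saDist P π ρ0 t s a ≤ ∑ a : A, saDist P π ρ0 t s a :=
        Finset.single_le_sum (fun a' _ => saDist_nonneg hP hπ hρ0 t s a') (Finset.mem_univ a)
    _ ≤ ∑ s : S, ∑ a : A, saDist P π ρ0 t s a :=
        Finset.single_le_sum (fun s' _ => Finset.sum_nonneg fun a' _ =>
          saDist_nonneg hP hπ hρ0 t s' a') (Finset.mem_univ s)
    _ = 1 := h

lemma saDist_summable (hγ : γ ∈ Set.Ioo (0:ℝ) 1) (hP : IsKernel P) (hπ : IsPolicy π)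
    (hρ0 : IsDist ρ0) (s : S) (a : A) :
    Summable (fun t : ℕ => γ ^ t * saDist P π ρ0 t s a) := by
  refine Summable.of_nonneg_of_le (fun t => mul_nonneg (pow_nonneg hγ.1.le t)
    (saDist_nonneg hP hπ hρ0 t s a)) (fun t => ?_) (summable_geometric_of_lt_one hγ.1.le hγ.2)
  calc γ ^ t * saDist P π ρ0 t s a ≤ γ ^ t * 1 := by
        exact mul_le_mul_of_nonneg_left (saDist_le_one hP hπ hρ0 t s a) (pow_nonneg hγ.1.le t)
    _ = γ ^ t := mul_one _


lemma occ_nonneg (hγ : γ ∈ Set.Ioo (0:ℝ) 1) (hP : IsKernel P) (hπ : IsPolicy π)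
    (hρ0 : IsDist ρ0) (s : S) (a : A) : 0 ≤ occ γ P π ρ0 s a := by
  refine mul_nonneg (by linarith [hγ.2]) (tsum_nonneg fun t => mul_nonneg
    (pow_nonneg hγ.1.le t) (saDist_nonneg hP hπ hρ0 t s a))

lemma sum_occ_eq (hγ : γ ∈ Set.Ioo (0:ℝ) 1) (hP : IsKernel P) (hπ : IsPolicy π)
    (hρ0 : IsDist ρ0) (s : S) :
    ∑ a : A, occ γ P π ρ0 s a =
      (1 - γ) * ∑' t : ℕ, γ ^ t * ∑ a : A, saDist P π ρ0 t s a := by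
  unfold occ
  rw [← Finset.mul_sum]
  congr 1
  rw [← Summable.tsum_finsetSum (fun a _ => saDist_summable hγ hP hπ hρ0 s a)]
  exact tsum_congr fun t => by rw [Finset.mul_sum]

lemma occ_total (hγ : γ ∈ Set.Ioo (0:ℝ) 1) (hP : IsKernel P) (hπ : IsPolicy π)
    (hρ0 : IsDist ρ0) : ∑ s : S, ∑ a : A, occ γ P π ρ0 s a = 1 := by
  have hsum : ∀ s : S, Summable (fun t : ℕ => γ ^ t * ∑ a : A, saDist P π ρ0 t s a) := by
    intro s
    have := summable_sum (s := (Finset.univ : Finset A))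
      (f := fun a (t : ℕ) => γ ^ t * saDist P π ρ0 t s a)
      (fun a _ => saDist_summable hγ hP hπ hρ0 s a)
    refine this.congr fun t => ?_
    rw [Finset.mul_sum]
  rw [Finset.sum_congr rfl fun s _ => sum_occ_eq hγ hP hπ hρ0 s, ← Finset.mul_sum,
    ← Summable.tsum_finsetSum (fun s _ => hsum s)]
  have h1 : ∀ t : ℕ, ∑ s : S, γ ^ t * ∑ a : A, saDist P π ρ0 t s a = γ ^ t := by
    intro t
    rw [← Finset.mul_sum, saDist_total hP hπ hρ0 t, mul_one]
  rw [tsum_congr h1, tsum_geometric_of_lt_one hγ.1.le hγ.2]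
  have : (1:ℝ) - γ ≠ 0 := by linarith [hγ.2]
  field_simp

lemma occ_flow (hγ : γ ∈ Set.Ioo (0:ℝ) 1) (hP : IsKernel P) (hπ : IsPolicy π)
    (hρ0 : IsDist ρ0) (s : S) :
    ∑ a : A, occ γ P π ρ0 s a =
      (1 - γ) * ρ0 s + γ * ∑ s' : S, ∑ a' : A, P s' a' s * occ γ P π ρ0 s' a' := by
  set m : ℕ → S → ℝ := fun t s => ∑ a : A, saDist P π ρ0 t s a with hm
  have hm0 : m 0 s = ρ0 s := by
    simp only [hm, saDist, ← Finset.mul_sum, (hπ s).2, mul_one]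
  have hmsucc : ∀ t, m (t+1) s = ∑ s' : S, ∑ a' : A, P s' a' s * saDist P π ρ0 t s' a' := by
    intro t
    simp only [hm, saDist, ← Finset.sum_mul, (hπ s).2, one_mul]
  have hsumm : Summable (fun t : ℕ => γ ^ t * m t s) := by
    have := summable_sum (s := (Finset.univ : Finset A))
      (f := fun a (t : ℕ) => γ ^ t * saDist P π ρ0 t s a)
      (fun a _ => saDist_summable hγ hP hπ hρ0 s a)
    refine this.congr fun t => ?_
    rw [Finset.mul_sum]
  rw [sum_occ_eq hγ hP hπ hρ0 s]
  have hshift : ∑' t : ℕ, γ ^ t * m t s = m 0 s + ∑' t : ℕ, γ ^ (t+1) * m (t+1) s := by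
    rw [Summable.tsum_eq_zero_add hsumm]
    simp
  have hswap : ∑' t : ℕ, γ ^ t * m (t+1) s =
      ∑ s' : S, ∑ a' : A, P s' a' s * ∑' t : ℕ, γ ^ t * saDist P π ρ0 t s' a' := by
    have : ∀ t : ℕ, γ ^ t * m (t+1) s =
        ∑ s' : S, ∑ a' : A, P s' a' s * (γ ^ t * saDist P π ρ0 t s' a') := by
      intro t
      rw [hmsucc t, Finset.mul_sum]
      refine Finset.sum_congr rfl fun s' _ => ?_
      rw [Finset.mul_sum]
      exact Finset.sum_congr rfl fun a' _ => by ring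
    rw [tsum_congr this]
    rw [Summable.tsum_finsetSum (fun s' _ => summable_sum (fun a' _ =>
      ((saDist_summable hγ hP hπ hρ0 s' a').mul_left (P s' a' s))))]
    refine Finset.sum_congr rfl fun s' _ => ?_
    rw [Summable.tsum_finsetSum (fun a' _ => (saDist_summable hγ hP hπ hρ0 s' a').mul_left (P s' a' s))]
    refine Finset.sum_congr rfl fun a' _ => ?_
    rw [tsum_mul_left]
  have hfinal : ∑' t : ℕ, γ ^ (t+1) * m (t+1) s = γ * ∑' t : ℕ, γ ^ t * m (t+1) s := by
    rw [← tsum_mul_left]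
    exact tsum_congr fun t => by ring
  rw [hshift, hm0, hfinal, hswap, mul_add]
  unfold occ
  have : ∑ s' : S, ∑ a' : A, P s' a' s *
      ((1-γ) * ∑' t : ℕ, γ ^ t * saDist P π ρ0 t s' a') =
      (1-γ) * ∑ s' : S, ∑ a' : A, P s' a' s * ∑' t : ℕ, γ ^ t * saDist P π ρ0 t s' a' := by
    rw [Finset.mul_sum]
    refine Finset.sum_congr rfl fun s' _ => ?_
    rw [Finset.mul_sum]
    exact Finset.sum_congr rfl fun a' _ => by ring
  rw [this]
  ring


end auxlemmas

section auxlemmas2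
variable {S A : Type*} [Fintype S] [Fintype A]
variable {γ : ℝ} {P : S → A → S → ℝ} {ρ0 : S → ℝ}

lemma flow_realizable [Nonempty A] (hγ : γ ∈ Set.Ioo (0:ℝ) 1) (hP : IsKernel P)
    (hρ0 : IsDist ρ0) (μ : S → A → ℝ) (hpos : ∀ s a, 0 ≤ μ s a)
    (hflow : ∀ s, ∑ a, μ s a = (1 - γ) * ρ0 s + γ * ∑ s' : S, ∑ a' : A, P s' a' s * μ s' a') :
    ∃ π' : S → A → ℝ, IsPolicy π' ∧ ∀ s a, occ γ P π' ρ0 s a = μ s a := by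
  classical
  set ν : S → ℝ := fun s => ∑ a, μ s a with hνdef
  set π' : S → A → ℝ :=
    fun s a => if ν s = 0 then (Fintype.card A : ℝ)⁻¹ else μ s a / ν s with hπ'def
  have hνnn : ∀ s, 0 ≤ ν s := fun s => Finset.sum_nonneg fun a _ => hpos s a
  have hcard : (Fintype.card A : ℝ) ≠ 0 := by
    exact_mod_cast (Fintype.card_ne_zero : Fintype.card A ≠ 0)
  have hpol : IsPolicy π' := by
    intro s
    constructor
    · intro a
      by_cases h : ν s = 0
      · simp only [hπ'def, h, if_true]
        positivity
      · simp only [hπ'def, h, if_false]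
        exact div_nonneg (hpos s a) (hνnn s)
    · by_cases h : ν s = 0
      · simp only [hπ'def, h, if_true]
        rw [Finset.sum_const, Finset.card_univ, nsmul_eq_mul, mul_inv_cancel₀ hcard]
      · simp only [hπ'def, h, if_false]
        rw [← Finset.sum_div]
        exact div_self h
  have hkey : ∀ s a, μ s a = π' s a * ν s := by
    intro s a
    by_cases h : ν s = 0
    · have : μ s a = 0 := by
        have := (Finset.sum_eq_zero_iff_of_nonneg
          (fun a' (_ : a' ∈ Finset.univ) => hpos s a')).mp h a (Finset.mem_univ a)
        exact this
      rw [this, h, mul_zero]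
    · simp only [hπ'def, h, if_false]
      rw [div_mul_cancel₀ _ h]
  have hsa : ∀ t s a, saDist P π' ρ0 t s a = π' s a * (∑ a' : A, saDist P π' ρ0 t s a') := by
    intro t s a
    cases t with
    | zero =>
      simp only [saDist, ← Finset.mul_sum, (hpol s).2, mul_one]
      ring
    | succ t =>
      simp only [saDist, ← Finset.sum_mul, (hpol s).2, one_mul]
  have hocc : ∀ s a, occ γ P π' ρ0 s a = π' s a * ∑ a' : A, occ γ P π' ρ0 s a' := by
    intro s a
    rw [sum_occ_eq hγ hP hpol hρ0 s]
    unfold occ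
    have h1 : ∀ t : ℕ, γ ^ t * saDist P π' ρ0 t s a =
        π' s a * (γ ^ t * ∑ a' : A, saDist P π' ρ0 t s a') := by
      intro t; rw [hsa t s a]; ring
    rw [tsum_congr h1, tsum_mul_left]
    ring
  set W : S → ℝ := fun s => ∑ a : A, occ γ P π' ρ0 s a with hWdef
  have hrw : ∀ (x : S → ℝ) (s : S),
      (∑ s' : S, ∑ a' : A, P s' a' s * (π' s' a' * x s')) =
      ∑ s' : S, (∑ a' : A, P s' a' s * π' s' a') * x s' := by
    intro x s
    refine Finset.sum_congr rfl fun s' _ => ?_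
    rw [Finset.sum_mul]
    exact Finset.sum_congr rfl fun a' _ => by ring
  set K : S → S → ℝ := fun s' s => ∑ a' : A, P s' a' s * π' s' a' with hKdef
  have hWflow : ∀ s, W s = (1 - γ) * ρ0 s + γ * ∑ s' : S, K s' s * W s' := by
    intro s
    have hstep : ∑ s' : S, ∑ a' : A, P s' a' s * occ γ P π' ρ0 s' a'
        = ∑ s' : S, K s' s * W s' := by
      refine Finset.sum_congr rfl fun s' _ => ?_
      show (∑ a' : A, P s' a' s * occ γ P π' ρ0 s' a') =
        (∑ a' : A, P s' a' s * π' s' a') * ∑ a : A, occ γ P π' ρ0 s' a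
      rw [Finset.sum_mul]
      refine Finset.sum_congr rfl fun a' _ => ?_
      rw [hocc s' a']
      ring
    show (∑ a : A, occ γ P π' ρ0 s a) = _
    rw [occ_flow hγ hP hpol hρ0 s, hstep]
  have hνflow : ∀ s, ν s = (1 - γ) * ρ0 s + γ * ∑ s' : S, K s' s * ν s' := by
    intro s
    have hstep : ∑ s' : S, ∑ a' : A, P s' a' s * μ s' a'
        = ∑ s' : S, K s' s * ν s' := by
      refine Finset.sum_congr rfl fun s' _ => ?_
      show (∑ a' : A, P s' a' s * μ s' a') =
        (∑ a' : A, P s' a' s * π' s' a') * ∑ a : A, μ s' a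
      rw [Finset.sum_mul]
      refine Finset.sum_congr rfl fun a' _ => ?_
      rw [hkey s' a']
      show P s' a' s * (π' s' a' * ∑ a : A, μ s' a) = _
      ring
    show (∑ a : A, μ s a) = _
    rw [hflow s, hstep]
  set d : S → ℝ := fun s => ν s - W s with hddef
  have hd : ∀ s, d s = γ * ∑ s' : S, K s' s * d s' := by
    intro s
    have : ∑ s' : S, K s' s * d s' = (∑ s' : S, K s' s * ν s') - ∑ s' : S, K s' s * W s' := by
      rw [← Finset.sum_sub_distrib]
      exact Finset.sum_congr rfl fun s' _ => by simp only [hddef]; ring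
    rw [this, hddef]
    simp only
    rw [hνflow s, hWflow s]
    ring
  have hKnn : ∀ s' s, 0 ≤ K s' s := fun s' s =>
    Finset.sum_nonneg fun a' _ => mul_nonneg ((hP s' a').1 s) ((hpol s').1 a')
  have hK1 : ∀ s', ∑ s : S, K s' s = 1 := by
    intro s'
    simp only [hKdef]
    rw [Finset.sum_comm]
    have : ∀ a', ∑ s : S, P s' a' s * π' s' a' = π' s' a' := by
      intro a'
      rw [← Finset.sum_mul, (hP s' a').2, one_mul]
    rw [Finset.sum_congr rfl fun a' _ => this a', (hpol s').2]
  have habs : ∑ s : S, |d s| ≤ γ * ∑ s : S, |d s| := by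
    calc ∑ s : S, |d s| = ∑ s : S, |γ * ∑ s' : S, K s' s * d s'| := by
          exact Finset.sum_congr rfl fun s _ => by rw [← hd s]
      _ = γ * ∑ s : S, |∑ s' : S, K s' s * d s'| := by
          rw [Finset.mul_sum]
          exact Finset.sum_congr rfl fun s _ => by
            rw [abs_mul, abs_of_pos hγ.1]
      _ ≤ γ * ∑ s : S, ∑ s' : S, K s' s * |d s'| := by
          refine mul_le_mul_of_nonneg_left (Finset.sum_le_sum fun s _ => ?_) hγ.1.le
          calc |∑ s' : S, K s' s * d s'| ≤ ∑ s' : S, |K s' s * d s'| :=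
                Finset.abs_sum_le_sum_abs _ _
            _ = ∑ s' : S, K s' s * |d s'| := Finset.sum_congr rfl fun s' _ => by
                rw [abs_mul, abs_of_nonneg (hKnn s' s)]
      _ = γ * ∑ s' : S, |d s'| := by
          congr 1
          rw [Finset.sum_comm]
          refine Finset.sum_congr rfl fun s' _ => ?_
          rw [← Finset.sum_mul, hK1 s', one_mul]
  have hsum0 : ∑ s : S, |d s| = 0 := by
    have hnn : 0 ≤ ∑ s : S, |d s| := Finset.sum_nonneg fun s _ => abs_nonneg _
    nlinarith [hγ.2]
  have hd0 : ∀ s, d s = 0 := by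
    intro s
    have := (Finset.sum_eq_zero_iff_of_nonneg
      (fun s' (_ : s' ∈ Finset.univ) => abs_nonneg (d s'))).mp hsum0 s (Finset.mem_univ s)
    exact abs_eq_zero.mp this
  refine ⟨π', hpol, fun s a => ?_⟩
  have hWν : W s = ν s := by have := hd0 s; simp only [hddef] at this; linarith
  rw [hocc s a, show (∑ a' : A, occ γ P π' ρ0 s a') = W s from rfl, hWν]
  exact (hkey s a).symm


end auxlemmas2

open scoped RealInnerProductSpace

/-- The occupancy measure of `π` viewed as a point of Euclidean space `ℝ^{S×A}`. -/
def occE {S A : Type*} [Fintype S] [Fintype A] (γ : ℝ) (P : S → A → S → ℝ)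
    (π : S → A → ℝ) (ρ0 : S → ℝ) : EuclideanSpace ℝ (S × A) :=
  WithLp.toLp 2 (fun p : S × A => occ γ P π ρ0 p.1 p.2)

/-- The Bellman flow polytope `M` inside Euclidean space `ℝ^{S×A}`. -/
def MflowE {S A : Type*} [Fintype S] [Fintype A] (γ : ℝ) (P : S → A → S → ℝ)
    (ρ0 : S → ℝ) : Set (EuclideanSpace ℝ (S × A)) :=
  {μ | (∀ p, 0 ≤ μ p) ∧ (∑ p : S × A, μ p = 1) ∧
    ∀ s, ∑ a, μ (s, a) = (1 - γ) * ρ0 s + γ * ∑ s' : S, ∑ a' : A, P s' a' s * μ (s', a')}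

/-- ε-version of the equivalence between first-order optimality for CURL and
exploitability in the associated MFG with reward `R(·,μ) = ∇F(μ)`:
`⟨∇F(μ_π), μ' - μ_π⟩ ≤ ε` for all `μ' ∈ M` iff the exploitability of `π` is at
most `ε`, i.e. `J(π', μ_π) - J(π, μ_π) ≤ ε` for every policy `π'`. -/
theorem stmt16 {S A : Type*} [Fintype S] [Fintype A] [Nonempty S] [Nonempty A]
    (γ : ℝ) (hγ : γ ∈ Set.Ioo (0 : ℝ) 1)
    (P : S → A → S → ℝ) (hP : IsKernel P)
    (ρ0 : S → ℝ) (hρ0 : IsDist ρ0)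
    (F : EuclideanSpace ℝ (S × A) → ℝ)
    (R : EuclideanSpace ℝ (S × A) → EuclideanSpace ℝ (S × A))
    (hF : ConcaveOn ℝ (MflowE γ P ρ0) F)
    (hgrad : ∀ μ ∈ MflowE γ P ρ0, HasGradientAt F (R μ) μ)
    (π : S → A → ℝ) (hπ : IsPolicy π)
    (ε : ℝ) (hε : 0 < ε) :
    (∀ μ' ∈ MflowE γ P ρ0, ⟪R (occE γ P π ρ0), μ' - occE γ P π ρ0⟫ ≤ ε) ↔
    (∀ π' : S → A → ℝ, IsPolicy π' →
      ⟪occE γ P π' ρ0, R (occE γ P π ρ0)⟫ - ⟪occE γ P π ρ0, R (occE γ P π ρ0)⟫ ≤ ε) := by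
  have hmem : ∀ (σ : S → A → ℝ), IsPolicy σ → occE γ P σ ρ0 ∈ MflowE γ P ρ0 := by
    intro σ hσ
    refine ⟨fun p => occ_nonneg hγ hP hσ hρ0 p.1 p.2, ?_, fun s => occ_flow hγ hP hσ hρ0 s⟩
    show ∑ p : S × A, occ γ P σ ρ0 p.1 p.2 = 1
    rw [Fintype.sum_prod_type]
    exact occ_total hγ hP hσ hρ0
  have hinner : ∀ μ' : EuclideanSpace ℝ (S × A),
      ⟪R (occE γ P π ρ0), μ' - occE γ P π ρ0⟫ =
      ⟪μ', R (occE γ P π ρ0)⟫ - ⟪occE γ P π ρ0, R (occE γ P π ρ0)⟫ := by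
    intro μ'
    rw [inner_sub_right, real_inner_comm (R (occE γ P π ρ0)) μ',
      real_inner_comm (R (occE γ P π ρ0)) (occE γ P π ρ0)]
  constructor
  · intro h π' hπ'
    have h2 := h (occE γ P π' ρ0) (hmem π' hπ')
    rwa [hinner] at h2
  · intro h μ' hμ'
    obtain ⟨π', hπ', heq⟩ := flow_realizable hγ hP hρ0 (fun s a => μ' (s, a))
      (fun s a => hμ'.1 (s, a)) (fun s => hμ'.2.2 s)
    have hEq : occE γ P π' ρ0 = μ' := by
      ext p
      exact (heq p.1 p.2).trans (by rfl)
    rw [hinner μ', ← hEq]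
    exact h π' hπ'
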